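/- arXiv:math/9607222 — 2 statements merged into one kernel-verified Lean document; each statement's English description precedes it below -/
import Mathlib

section
/- Let G be a group and H = (G° ⋊ G*)/K where G° is a normal subgroup with a homomorphism Ad : G° → G* ≤ Aut-type group, and K = {(x⁻¹, Ad x) : x ∈ [G,G]} with [G,G] ⊆ G°. If [g*, T*] ⊆ Ad[G,G] for a subgroup T* ≤ G* and an element g* ∈ G*, then the image of T* in H normalizes the image of the subgroup generated by G° and g*. -/
/-- Let `H = (G° ⋊ G*)/K` with `K = {(x⁻¹, Ad x) : x ∈ D}`.
If `[g*, t] ∈ Ad D` for every `t ∈ T*`, then the image of `T*` in `H` normalizes the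
image of the subgroup generated by `G°` and `g*`. -/
theorem stmt_8 {G₀ Gs : Type*} [Group G₀] [Group Gs]
    (act : Gs →* MulAut G₀) (Ad : G₀ →* Gs)
    (hequiv : ∀ (s : Gs) (x : G₀), Ad (act s x) = s * Ad x * s⁻¹)
    (D : Subgroup G₀)
    (hinj : Set.InjOn Ad (D : Set G₀))
    (hAdD : (D.map Ad).Normal)
    (K : Subgroup (G₀ ⋊[act] Gs)) [K.Normal]
    (hK : ∀ z : G₀ ⋊[act] Gs, z ∈ K ↔ ∃ x ∈ D, z = ⟨x⁻¹, Ad x⟩)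
    (Ts : Subgroup Gs) (gs : Gs)
    (hcomm : ∀ t ∈ Ts, gs * t * gs⁻¹ * t⁻¹ ∈ D.map Ad) :
    ∀ t ∈ Ts,
      QuotientGroup.mk' K (SemidirectProduct.inr t) ∈
        Subgroup.normalizer ((Subgroup.map (QuotientGroup.mk' K)
          ((⊤ : Subgroup G₀).map (SemidirectProduct.inl : G₀ →* G₀ ⋊[act] Gs) ⊔
            Subgroup.zpowers (SemidirectProduct.inr gs)) : Subgroup _) : Set _) := by
  set mk : G₀ ⋊[act] Gs →* _ := QuotientGroup.mk' K with hmk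
  set P : Subgroup (G₀ ⋊[act] Gs) :=
    (⊤ : Subgroup G₀).map (SemidirectProduct.inl : G₀ →* G₀ ⋊[act] Gs) ⊔
      Subgroup.zpowers (SemidirectProduct.inr gs) with hP
  set L : Subgroup _ := P.map mk with hL
  -- key claim: conjugation by mk (inr t) maps L into L for t ∈ Ts
  have key : ∀ t ∈ Ts, ∀ h ∈ L, mk (SemidirectProduct.inr t) * h *
      (mk (SemidirectProduct.inr t))⁻¹ ∈ L := by
    intro t ht h hh
    obtain ⟨z, hz, rfl⟩ := hh
    have : mk (SemidirectProduct.inr t) * mk z * (mk (SemidirectProduct.inr t))⁻¹ =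
        mk (SemidirectProduct.inr t * z * (SemidirectProduct.inr t)⁻¹) := by
      simp [map_mul, map_inv]
    rw [this]
    -- the hom f : z ↦ mk (inr t * z * (inr t)⁻¹)
    set f : G₀ ⋊[act] Gs →* _ :=
      mk.comp (MulAut.conj (SemidirectProduct.inr t : G₀ ⋊[act] Gs)).toMonoidHom with hf
    have hPle : P ≤ L.comap f := by
      rw [hP]
      apply sup_le
      · rintro w ⟨x, -, rfl⟩
        have : f (SemidirectProduct.inl x) = mk (SemidirectProduct.inl (act t x)) := by
          simp [hf, MulAut.conj_apply, SemidirectProduct.inl_aut]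
        simp only [Subgroup.mem_comap, this]
        exact ⟨SemidirectProduct.inl (act t x),
          Subgroup.mem_sup_left ⟨act t x, trivial, rfl⟩, rfl⟩
      · rw [Subgroup.zpowers_le, Subgroup.mem_comap]
        -- f (inr gs) = mk (inr (t * gs * t⁻¹))
        have h1 : f (SemidirectProduct.inr gs) =
            mk (SemidirectProduct.inr (t * gs * t⁻¹)) := by
          simp [hf, MulAut.conj_apply, ← map_mul, ← map_inv]
        obtain ⟨d, hd, hd2⟩ := hcomm t ht
        -- t * gs * t⁻¹ * gs⁻¹ = (gs * t * gs⁻¹ * t⁻¹)⁻¹ = (Ad d)⁻¹ = Ad d⁻¹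
        have h2 : t * gs * t⁻¹ = Ad d⁻¹ * gs := by
          rw [map_inv, hd2]
          group
        rw [h1, h2]
        -- mk (inr (Ad d⁻¹)) = mk (inl d⁻¹)
        have h3 : mk (SemidirectProduct.inl (d⁻¹ : G₀)) =
            mk (SemidirectProduct.inr (Ad d⁻¹)) := by
          rw [hmk, QuotientGroup.mk'_eq_mk']
          refine ⟨⟨d, Ad d⁻¹⟩, ?_, ?_⟩
          · rw [hK]
            exact ⟨d⁻¹, D.inv_mem hd, by simp⟩
          · ext <;> simp
        have h4 : mk (SemidirectProduct.inr (Ad d⁻¹ * gs)) =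
            mk (SemidirectProduct.inl (d⁻¹ : G₀)) * mk (SemidirectProduct.inr gs) := by
          rw [h3, ← map_mul, ← map_mul]
        rw [h4]
        exact L.mul_mem
          ⟨SemidirectProduct.inl (d⁻¹ : G₀), Subgroup.mem_sup_left ⟨d⁻¹, trivial, rfl⟩, rfl⟩
          ⟨SemidirectProduct.inr gs, Subgroup.mem_sup_right (Subgroup.mem_zpowers _), rfl⟩
    exact hPle hz
  intro t ht
  rw [Subgroup.mem_normalizer_iff]
  intro h
  constructor
  · exact fun hh => key t ht h hh
  · intro hh
    have := key t⁻¹ (Ts.inv_mem ht)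
      (mk (SemidirectProduct.inr t) * h * (mk (SemidirectProduct.inr t))⁻¹) hh
    have heq : mk (SemidirectProduct.inr t⁻¹) *
        (mk (SemidirectProduct.inr t) * h * (mk (SemidirectProduct.inr t))⁻¹) *
        (mk (SemidirectProduct.inr t⁻¹))⁻¹ = h := by
      rw [show SemidirectProduct.inr (t⁻¹) = (SemidirectProduct.inr t : G₀ ⋊[act] Gs)⁻¹
        from map_inv _ _, map_inv]
      group
    rwa [heq] at this
end

section
/- Let S* be a compact torus, written as an internal direct product S* = S_L × S_Δ of subtori, sitting inside a product L* × T* of groups with S_L ≤ L*. Let S_⊥ be the image of S_Δ under the projection L* × T* → L*. Then S_L ∩ S_⊥ = {e} and S* ≤ S_L × S_⊥ × T* (as subgroups of L* × T*, identifying S_⊥ × T* appropriately). -/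
/-- If the compact torus `S* ≤ L* × T*` is an internal direct product
`S_L × S_Δ` with `S_L ≤ L* × {e}` and `S* ∩ ({e} × T*) ≤ S_Δ`, and `S_⊥` is the
projection of `S_Δ` to `L*`, then `S_L ∩ S_⊥ = {e}` (as subgroups of `L*`) and
`S* ≤ S_L × S_⊥ × T*`. -/
theorem stmt_9 {L T : Type*} [Group L] [Group T]
    [TopologicalSpace L] [TopologicalSpace T]
    [IsTopologicalGroup L] [IsTopologicalGroup T]
    (S SL SΔ : Subgroup (L × T))
    (hScpt : IsCompact (S : Set (L × T))) (hSconn : IsConnected (S : Set (L × T)))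
    (hScomm : ∀ x ∈ S, ∀ y ∈ S, x * y = y * x)
    (hSL : SL ≤ S) (hSΔ : SΔ ≤ S)
    (hsup : SL ⊔ SΔ = S) (hinf : SL ⊓ SΔ = ⊥)
    (hSLinL : ∀ x ∈ SL, x.2 = 1)
    (hcontains : S ⊓ ((⊥ : Subgroup L).prod ⊤) ≤ SΔ)
    (Sperp : Subgroup L) (hSperp : Sperp = SΔ.map (MonoidHom.fst L T)) :
    (SL.map (MonoidHom.fst L T)) ⊓ Sperp = ⊥ ∧
      S ≤ SL ⊔ Sperp.prod ⊤ := by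
  subst hSperp
  constructor
  · rw [eq_bot_iff]
    rintro x ⟨hx1, hx2⟩
    obtain ⟨a, haSL, ha⟩ := hx1
    obtain ⟨b, hbSΔ, hb⟩ := hx2
    have ha2 : a.2 = 1 := hSLinL a haSL
    have hmem : a * b⁻¹ ∈ SΔ := by
      apply hcontains
      refine ⟨S.mul_mem (hSL haSL) (S.inv_mem (hSΔ hbSΔ)), ?_, trivial⟩
      show a.1 * b.1⁻¹ ∈ (⊥ : Subgroup L)
      have ha' : a.1 = x := ha
      have hb' : b.1 = x := hb
      simp [ha', hb']
    have haΔ : a ∈ SΔ := by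
      have := SΔ.mul_mem hmem hbSΔ
      simpa using this
    have : a ∈ SL ⊓ SΔ := ⟨haSL, haΔ⟩
    rw [hinf] at this
    simp only [Subgroup.mem_bot] at this
    simp [← ha, this]
  · rw [← hsup]
    apply sup_le
    · exact le_sup_left
    · refine le_trans ?_ le_sup_right
      intro s hs
      exact ⟨⟨s, hs, rfl⟩, trivial⟩
end
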